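/- arXiv:2509.06179 — 2 statements merged into one kernel-verified Lean document; each statement's English description precedes it below -/
import Mathlib

section
/- For each α ≥ 0, there exists a unique γ ≥ 0 satisfying 4^α · B(1+α, 1+α) = (27/4)^γ · B(1+γ, 1+2γ). In particular, α = 0 corresponds to γ = 0. -/
open MeasureTheory

/-- Euler Beta function as an integral. -/
noncomputable def Beta (a b : ℝ) : ℝ := ∫ t in (0:ℝ)..1, t ^ (a - 1) * (1 - t) ^ (b - 1)

open intervalIntegral Set Filter Topology

noncomputable def phi (t : ℝ) : ℝ := 27/4 * (t * (1 - t)^2)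

noncomputable def F (γ : ℝ) : ℝ := ∫ t in (0:ℝ)..1, phi t ^ γ

lemma phi_nonneg {t : ℝ} (h0 : 0 ≤ t) (h1 : t ≤ 1) : 0 ≤ phi t := by
  unfold phi; positivity

lemma phi_le_one {t : ℝ} (h0 : 0 ≤ t) (h1 : t ≤ 1) : phi t ≤ 1 := by
  unfold phi; nlinarith [sq_nonneg (1 - 3*t), sq_nonneg t]

lemma phi_pos {t : ℝ} (h : t ∈ Ioo (0:ℝ) 1) : 0 < phi t := by
  obtain ⟨h0, h1⟩ := h
  have : (0:ℝ) < 1 - t := by linarith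
  unfold phi; positivity

lemma phi_lt_one {t : ℝ} (h : t ∈ Ioo (0:ℝ) 1) (h3 : t ≠ 1/3) : phi t < 1 := by
  obtain ⟨h0, h1⟩ := h
  have h2 : (1 - 3*t)^2 > 0 := by
    have : 1 - 3*t ≠ 0 := by intro hc; apply h3; linarith
    positivity
  unfold phi; nlinarith [mul_pos h2 (show (0:ℝ) < 4 - 3*t by linarith)]

lemma cont_rpow {a : ℝ} (ha : 0 ≤ a) : Continuous fun x : ℝ => x ^ a := by
  rw [continuous_iff_continuousAt]
  exact fun x => Real.continuousAt_rpow_const x a (Or.inr ha)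

lemma phi_cont : Continuous phi := by unfold phi; fun_prop

lemma integrand_cont {γ : ℝ} (hγ : 0 ≤ γ) : Continuous fun t => phi t ^ γ :=
  (cont_rpow hγ).comp phi_cont

lemma F_zero : F 0 = 1 := by simp [F]

lemma ae_ne (c : ℝ) : ∀ᵐ t : ℝ ∂volume, t ≠ c := by
  rw [ae_iff]
  simpa using measure_singleton (c : ℝ)

lemma F_cont : ContinuousOn F (Ici 0) := by
  intro γ₀ hγ₀
  apply intervalIntegral.continuousWithinAt_of_dominated_interval (bound := fun _ => 1)
  · filter_upwards [self_mem_nhdsWithin] with γ (hγ : γ ∈ Ici 0)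
    exact (integrand_cont hγ).aestronglyMeasurable
  · filter_upwards [self_mem_nhdsWithin] with γ (hγ : γ ∈ Ici 0)
    refine Eventually.of_forall fun t ht => ?_
    rw [uIoc_of_le zero_le_one] at ht
    rw [Real.norm_eq_abs, abs_of_nonneg (Real.rpow_nonneg (phi_nonneg ht.1.le ht.2) γ)]
    exact Real.rpow_le_one (phi_nonneg ht.1.le ht.2) (phi_le_one ht.1.le ht.2) hγ
  · exact intervalIntegrable_const
  · filter_upwards [ae_ne 1] with t ht1 ht
    rw [uIoc_of_le zero_le_one] at ht
    have hpos : 0 < phi t := phi_pos ⟨ht.1, lt_of_le_of_ne ht.2 ht1⟩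
    exact (Real.continuousAt_const_rpow hpos.ne').continuousWithinAt

lemma F_anti : StrictAntiOn F (Ici 0) := by
  intro a ha b hb hab
  have hb0 : (0:ℝ) < b := lt_of_le_of_lt ha hab
  have key : ∀ t ∈ Icc (0:ℝ) 1, phi t ^ b ≤ phi t ^ a := by
    intro t ht
    rcases eq_or_lt_of_le (phi_nonneg ht.1 ht.2) with h0 | h0
    · rw [← h0, Real.zero_rpow hb0.ne']
      exact Real.rpow_nonneg le_rfl a
    · exact Real.rpow_le_rpow_of_exponent_ge h0 (phi_le_one ht.1 ht.2) hab.le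
  have hia : IntervalIntegrable (fun t => phi t ^ a) volume 0 1 :=
    (integrand_cont ha).intervalIntegrable 0 1
  have hib : IntervalIntegrable (fun t => phi t ^ b) volume 0 1 :=
    (integrand_cont (le_of_lt hb0)).intervalIntegrable 0 1
  have hsub : F a - F b = ∫ t in (0:ℝ)..1, (phi t ^ a - phi t ^ b) :=
    (intervalIntegral.integral_sub hia hib).symm
  have hcsub : Continuous (fun t => phi t ^ a - phi t ^ b) :=
    (integrand_cont ha).sub (integrand_cont (le_of_lt hb0))
  have hsplit : (∫ t in (0:ℝ)..1, (phi t ^ a - phi t ^ b))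
      = (∫ t in (0:ℝ)..(1/3), (phi t ^ a - phi t ^ b))
        + ∫ t in (1/3:ℝ)..1, (phi t ^ a - phi t ^ b) :=
    (intervalIntegral.integral_add_adjacent_intervals
      (hcsub.intervalIntegrable 0 (1/3)) (hcsub.intervalIntegrable (1/3) 1)).symm
  have h1 : 0 < ∫ t in (0:ℝ)..(1/3), (phi t ^ a - phi t ^ b) := by
    apply intervalIntegral_pos_of_pos_on
    · exact hcsub.intervalIntegrable 0 (1/3)
    · intro t ht
      have htI : t ∈ Ioo (0:ℝ) 1 := ⟨ht.1, lt_trans ht.2 (by norm_num)⟩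
      have hlt : phi t ^ b < phi t ^ a :=
        Real.rpow_lt_rpow_of_exponent_gt (phi_pos htI) (phi_lt_one htI (ne_of_lt ht.2)) hab
      linarith
    · norm_num
  have h2 : 0 ≤ ∫ t in (1/3:ℝ)..1, (phi t ^ a - phi t ^ b) := by
    apply intervalIntegral.integral_nonneg (by norm_num)
    intro t ht
    have := key t ⟨le_trans (by norm_num) ht.1, ht.2⟩
    linarith
  have : 0 < F a - F b := by rw [hsub, hsplit]; linarith
  linarith

lemma F_tendsto : Tendsto F atTop (𝓝 0) := by
  have h0 : (𝓝 (0:ℝ)) = 𝓝 (∫ (_t : ℝ) in (0:ℝ)..1, (0:ℝ)) := by simp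
  rw [h0]
  apply intervalIntegral.tendsto_integral_filter_of_dominated_convergence
    (bound := fun _ => (1:ℝ))
  · filter_upwards [eventually_ge_atTop (0:ℝ)] with γ hγ
    exact (integrand_cont hγ).aestronglyMeasurable
  · filter_upwards [eventually_ge_atTop (0:ℝ)] with γ hγ
    refine Eventually.of_forall fun t ht => ?_
    rw [uIoc_of_le zero_le_one] at ht
    rw [Real.norm_eq_abs, abs_of_nonneg (Real.rpow_nonneg (phi_nonneg ht.1.le ht.2) γ)]
    exact Real.rpow_le_one (phi_nonneg ht.1.le ht.2) (phi_le_one ht.1.le ht.2) hγ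
  · exact intervalIntegrable_const
  · filter_upwards [ae_ne 1, ae_ne (1/3)] with t ht1 ht3 ht
    rw [uIoc_of_le zero_le_one] at ht
    have htI : t ∈ Ioo (0:ℝ) 1 := ⟨ht.1, lt_of_le_of_ne ht.2 ht1⟩
    exact tendsto_rpow_atTop_of_base_lt_one _
      (by linarith [phi_pos htI]) (phi_lt_one htI ht3)

lemma hF_eq {γ : ℝ} (hγ : 0 ≤ γ) : ((27:ℝ)/4) ^ γ * Beta (1+γ) (1+2*γ) = F γ := by
  unfold Beta F
  rw [← intervalIntegral.integral_const_mul]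
  apply intervalIntegral.integral_congr
  intro t ht
  rw [uIcc_of_le zero_le_one] at ht
  have h0 : (0:ℝ) ≤ t := ht.1
  have h1 : (0:ℝ) ≤ 1 - t := by linarith [ht.2]
  have e1 : (1:ℝ) + γ - 1 = γ := by ring
  have e2 : (1:ℝ) + 2*γ - 1 = 2*γ := by ring
  rw [e1, e2]
  show ((27:ℝ)/4) ^ γ * (t ^ γ * (1-t) ^ (2*γ)) = ((27:ℝ)/4 * (t * (1-t)^2)) ^ γ
  rw [Real.mul_rpow (by norm_num) (by positivity),
    Real.mul_rpow h0 (by positivity), ← Real.rpow_natCast (1-t) 2,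
    ← Real.rpow_mul h1]
  norm_num

lemma G_eq {α : ℝ} (hα : 0 ≤ α) :
    (4:ℝ) ^ α * Beta (1+α) (1+α) = ∫ t in (0:ℝ)..1, (4 * (t * (1-t))) ^ α := by
  unfold Beta
  rw [← intervalIntegral.integral_const_mul]
  apply intervalIntegral.integral_congr
  intro t ht
  rw [uIcc_of_le zero_le_one] at ht
  have h0 : (0:ℝ) ≤ t := ht.1
  have h1 : (0:ℝ) ≤ 1 - t := by linarith [ht.2]
  have e1 : (1:ℝ) + α - 1 = α := by ring
  rw [e1]
  show (4:ℝ) ^ α * (t ^ α * (1-t) ^ α) = ((4:ℝ) * (t * (1-t))) ^ α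
  rw [Real.mul_rpow (by norm_num) (by positivity), Real.mul_rpow h0 h1]

lemma G_pos {α : ℝ} (hα : 0 ≤ α) : 0 < ∫ t in (0:ℝ)..1, (4 * (t * (1-t))) ^ α := by
  have hc : Continuous fun t : ℝ => (4 * (t * (1-t))) ^ α := by
    apply (cont_rpow hα).comp; fun_prop
  apply intervalIntegral_pos_of_pos_on (hc.intervalIntegrable 0 1)
  · intro t ht
    have h1 : (0:ℝ) < 1 - t := by linarith [ht.2]
    have ht0 : (0:ℝ) < t := ht.1
    have h2 : (0:ℝ) < 4 * (t * (1-t)) := by positivity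
    exact Real.rpow_pos_of_pos h2 α
  · norm_num

lemma G_le_one {α : ℝ} (hα : 0 ≤ α) : (∫ t in (0:ℝ)..1, (4 * (t * (1-t))) ^ α) ≤ 1 := by
  have hc : Continuous fun t : ℝ => (4 * (t * (1-t))) ^ α := by
    apply (cont_rpow hα).comp; fun_prop
  have hmono : (∫ t in (0:ℝ)..1, (4 * (t * (1-t))) ^ α)
      ≤ ∫ _t in (0:ℝ)..1, (1:ℝ) := by
    apply intervalIntegral.integral_mono_on zero_le_one (hc.intervalIntegrable 0 1)
      intervalIntegrable_const
    intro t ht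
    have h0 : (0:ℝ) ≤ 4 * (t * (1-t)) := by nlinarith [ht.1, ht.2]
    exact Real.rpow_le_one h0 (by nlinarith [sq_nonneg (1 - 2*t)]) hα
  simpa using hmono

theorem stmt5 :
    (∀ α : ℝ, 0 ≤ α → ∃! γ : ℝ, 0 ≤ γ ∧
      (4:ℝ) ^ α * Beta (1 + α) (1 + α) = ((27:ℝ)/4) ^ γ * Beta (1 + γ) (1 + 2*γ)) ∧
    (4:ℝ) ^ (0:ℝ) * Beta (1 + 0) (1 + 0)
      = ((27:ℝ)/4) ^ (0:ℝ) * Beta (1 + 0) (1 + 2*0) := by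
  constructor
  · intro α hα
    set c := (4:ℝ) ^ α * Beta (1 + α) (1 + α) with hc
    have hcpos : 0 < c := by rw [hc, G_eq hα]; exact G_pos hα
    have hcle : c ≤ 1 := by rw [hc, G_eq hα]; exact G_le_one hα
    obtain ⟨M, hM⟩ := ((F_tendsto.eventually (eventually_lt_nhds hcpos)).and
      (eventually_ge_atTop (0:ℝ))).exists
    obtain ⟨hMlt, hM0⟩ := hM
    have hivt := intermediate_value_Icc' hM0 (F_cont.mono (Icc_subset_Ici_self))
    have hcmem : c ∈ Icc (F M) (F 0) := ⟨hMlt.le, by rw [F_zero]; exact hcle⟩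
    obtain ⟨γ, hγmem, hγeq⟩ := hivt hcmem
    refine ⟨γ, ⟨hγmem.1, ?_⟩, ?_⟩
    · rw [hF_eq hγmem.1, hγeq]
    · rintro y ⟨hy0, hyeq⟩
      have hFy : F y = F γ := by
        rw [← hF_eq hy0, ← hyeq]; exact hγeq.symm
      exact F_anti.injOn hy0 hγmem.1 hFy
  · norm_num
end

section
/- For μ > 0 and the habitat [-L/2, L/2] with L = π/√μ, the function ρ_s(X) = C (cos(√μ X))^(1/μ) with C > 0 is a nonnegative steady solution of ρ_T = (ρ^(μ-1) ρ_X)_X + ρ^μ vanishing at the boundary, and it is positive on the open interval (-L/2, L/2). -/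
theorem stmt19 (μ C : ℝ) (hμ : 0 < μ) (hC : 0 < C) :
    (∀ X ∈ Set.Icc (-(Real.pi / Real.sqrt μ) / 2) ((Real.pi / Real.sqrt μ) / 2),
        0 ≤ C * Real.cos (Real.sqrt μ * X) ^ (1/μ)) ∧
    (∀ X ∈ Set.Ioo (-(Real.pi / Real.sqrt μ) / 2) ((Real.pi / Real.sqrt μ) / 2),
        0 < C * Real.cos (Real.sqrt μ * X) ^ (1/μ)) ∧
    (∀ X ∈ Set.Ioo (-(Real.pi / Real.sqrt μ) / 2) ((Real.pi / Real.sqrt μ) / 2),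
        deriv (fun Y => (C * Real.cos (Real.sqrt μ * Y) ^ (1/μ)) ^ (μ - 1) *
            deriv (fun Z => C * Real.cos (Real.sqrt μ * Z) ^ (1/μ)) Y) X
          + (C * Real.cos (Real.sqrt μ * X) ^ (1/μ)) ^ μ = 0) ∧
    C * Real.cos (Real.sqrt μ * (-(Real.pi / Real.sqrt μ) / 2)) ^ (1/μ) = 0 ∧
    C * Real.cos (Real.sqrt μ * ((Real.pi / Real.sqrt μ) / 2)) ^ (1/μ) = 0 := by
  set s := Real.sqrt μ with hsdef
  have hs : 0 < s := Real.sqrt_pos.mpr hμ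
  have hss : s * s = μ := Real.mul_self_sqrt hμ.le
  have hbd : s * ((Real.pi / s) / 2) = Real.pi / 2 := by
    field_simp
  -- cos positive on the open interval
  have hcos : ∀ Y ∈ Set.Ioo (-(Real.pi / s) / 2) ((Real.pi / s) / 2),
      0 < Real.cos (s * Y) := by
    intro Y hY
    apply Real.cos_pos_of_mem_Ioo
    constructor
    · have := (mul_lt_mul_iff_right₀ hs).mpr hY.1
      rw [show s * (-(Real.pi / s) / 2) = -(Real.pi / 2) by field_simp] at this
      linarith
    · have := (mul_lt_mul_iff_right₀ hs).mpr hY.2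
      rw [hbd] at this
      linarith
  -- nonneg of cos on closed interval
  have hcos0 : ∀ Y ∈ Set.Icc (-(Real.pi / s) / 2) ((Real.pi / s) / 2),
      0 ≤ Real.cos (s * Y) := by
    intro Y hY
    apply Real.cos_nonneg_of_mem_Icc
    constructor
    · have := (mul_le_mul_iff_right₀ hs).mpr hY.1
      rw [show s * (-(Real.pi / s) / 2) = -(Real.pi / 2) by field_simp] at this
      linarith
    · have := (mul_le_mul_iff_right₀ hs).mpr hY.2
      rw [hbd] at this
      linarith
  refine ⟨?_, ?_, ?_, ?_, ?_⟩
  · intro X hX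
    exact mul_nonneg hC.le (Real.rpow_nonneg (hcos0 X hX) _)
  · intro X hX
    exact mul_pos hC (Real.rpow_pos_of_pos (hcos X hX) _)
  · intro X hX
    -- derivative of ρ at points of the open interval
    have hderiv : ∀ Y ∈ Set.Ioo (-(Real.pi / s) / 2) ((Real.pi / s) / 2),
        HasDerivAt (fun Z => C * Real.cos (s * Z) ^ (1/μ))
          (C * ((-Real.sin (s * Y) * (s * 1)) * (1/μ) * Real.cos (s * Y) ^ (1/μ - 1))) Y := by
      intro Y hY
      have h1 : HasDerivAt (fun Z : ℝ => s * Z) (s * 1) Y := (hasDerivAt_id Y).const_mul s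
      have h2 : HasDerivAt (fun Z : ℝ => Real.cos (s * Z)) (-Real.sin (s * Y) * (s * 1)) Y :=
        (Real.hasDerivAt_cos (s * Y)).comp Y h1
      have h3 := h2.rpow_const (p := 1/μ) (Or.inl (hcos Y hY).ne')
      exact h3.const_mul C
    -- the inner function equals a simple function on the open interval
    have hU : IsOpen (Set.Ioo (-(Real.pi / s) / 2) ((Real.pi / s) / 2)) := isOpen_Ioo
    have hinner : ∀ Y ∈ Set.Ioo (-(Real.pi / s) / 2) ((Real.pi / s) / 2),
        (C * Real.cos (s * Y) ^ (1/μ)) ^ (μ - 1) *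
          deriv (fun Z => C * Real.cos (s * Z) ^ (1/μ)) Y
        = C ^ μ * (-(s / μ)) * Real.sin (s * Y) := by
      intro Y hY
      rw [(hderiv Y hY).deriv]
      have hc := hcos Y hY
      rw [Real.mul_rpow hC.le (Real.rpow_nonneg hc.le _)]
      have e1 : (Real.cos (s*Y) ^ (1/μ)) ^ (μ-1) * Real.cos (s*Y) ^ (1/μ - 1) = 1 := by
        rw [← Real.rpow_mul hc.le, ← Real.rpow_add hc,
          show (1/μ)*(μ-1) + (1/μ - 1) = 0 by field_simp; ring, Real.rpow_zero]
      have e2 : C ^ (μ-1) * C = C ^ μ := by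
        calc C ^ (μ-1) * C = C ^ (μ-1) * C ^ (1:ℝ) := by rw [Real.rpow_one]
          _ = C ^ (μ - 1 + 1) := (Real.rpow_add hC _ _).symm
          _ = C ^ μ := by norm_num
      calc C ^ (μ-1) * (Real.cos (s*Y) ^ (1/μ)) ^ (μ-1) *
            (C * (-Real.sin (s * Y) * (s * 1) * (1/μ) * Real.cos (s * Y) ^ (1/μ - 1)))
          = (C ^ (μ-1) * C) *
              ((Real.cos (s*Y) ^ (1/μ)) ^ (μ-1) * Real.cos (s * Y) ^ (1/μ - 1)) *
              (-Real.sin (s * Y) * (s * 1) * (1/μ)) := by ring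
        _ = C ^ μ * -(s / μ) * Real.sin (s * Y) := by rw [e1, e2]; ring
    have heq : Set.EqOn
        (fun Y => (C * Real.cos (s * Y) ^ (1/μ)) ^ (μ - 1) *
          deriv (fun Z => C * Real.cos (s * Z) ^ (1/μ)) Y)
        (fun Y => C ^ μ * (-(s / μ)) * Real.sin (s * Y))
        (Set.Ioo (-(Real.pi / s) / 2) ((Real.pi / s) / 2)) := fun Y hY => hinner Y hY
    have hEv : (fun Y => (C * Real.cos (s * Y) ^ (1/μ)) ^ (μ - 1) *
          deriv (fun Z => C * Real.cos (s * Z) ^ (1/μ)) Y)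
        =ᶠ[nhds X] (fun Y => C ^ μ * (-(s / μ)) * Real.sin (s * Y)) :=
      Filter.eventuallyEq_of_mem (hU.mem_nhds hX) heq
    rw [hEv.deriv_eq]
    have hg : HasDerivAt (fun Y => C ^ μ * (-(s / μ)) * Real.sin (s * Y))
        (C ^ μ * (-(s / μ)) * (Real.cos (s * X) * (s * 1))) X := by
      have h1 : HasDerivAt (fun Z : ℝ => s * Z) (s * 1) X := (hasDerivAt_id X).const_mul s
      exact ((Real.hasDerivAt_sin (s * X)).comp X h1).const_mul _
    rw [hg.deriv]
    -- ρ ^ μ simplification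
    have hρμ : (C * Real.cos (s * X) ^ (1/μ)) ^ μ = C ^ μ * Real.cos (s * X) := by
      rw [Real.mul_rpow hC.le (Real.rpow_nonneg (hcos X hX).le _),
        ← Real.rpow_mul (hcos X hX).le, one_div, inv_mul_cancel₀ hμ.ne', Real.rpow_one]
    rw [hρμ]
    have : C ^ μ * (-(s / μ)) * (Real.cos (s * X) * (s * 1))
        = -(C ^ μ * Real.cos (s * X)) := by
      field_simp
      linear_combination (-Real.cos (s * X)) * hss
    rw [this]; ring
  · rw [show s * (-(Real.pi / s) / 2) = -(Real.pi / 2) by field_simp]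
    rw [Real.cos_neg, Real.cos_pi_div_two, Real.zero_rpow (by positivity : (1:ℝ)/μ ≠ 0), mul_zero]
  · rw [hbd, Real.cos_pi_div_two, Real.zero_rpow (by positivity : (1:ℝ)/μ ≠ 0), mul_zero]
end
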